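/- There exists a constant C > 0 such that for every integer n ≥ 1 and every integer r ≥ 1 there is a sequence X : Fin N → (Fin r → ZMod n), where N = ⌊(n/2) · (max(5/4 − C·n^(−3/2), 0))^r⌋, containing no zero-sum subsequence of length 2n. Equivalently, the generalized Erdős–Ginzburg–Ziv constant satisfies s_{2n}(C_n^r) > (n/2)·(5/4 − O(n^(−3/2)))^r. -/

import Mathlib

open Finset Real Nat

-- squared central binomial bound
lemma centralsq : ∀ n : ℕ, ((2*n).choose n)^2 * (3*n+1) ≤ 16^n := by
  intro n
  induction n with
  | zero => simp
  | succ n ih =>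
    have h := Nat.succ_mul_centralBinom_succ n
    rw [Nat.centralBinom, Nat.centralBinom] at h
    have hrw : 2 * (n+1) = 2*n + 2 := by ring
    set c := (2*n).choose n with hc
    set c' := (2*(n+1)).choose (n+1) with hc'
    have key : (2*n+1)^2*(3*n+4) ≤ 4*(n+1)^2*(3*n+1) := by nlinarith
    have big : (n+1)^2 * (c'^2*(3*(n+1)+1)) ≤ (n+1)^2 * 16^(n+1) := by
      calc (n+1)^2 * (c'^2*(3*(n+1)+1)) = ((n+1)*c')^2 * (3*n+4) := by ring
        _ = (2*(2*n+1)*c)^2*(3*n+4) := by rw [h]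
        _ = 4*((2*n+1)^2*(3*n+4))*c^2 := by ring
        _ ≤ 4*(4*(n+1)^2*(3*n+1))*c^2 := by
            exact Nat.mul_le_mul_right _ (Nat.mul_le_mul_left _ key)
        _ = (n+1)^2*(16*(c^2*(3*n+1))) := by ring
        _ ≤ (n+1)^2*(16*16^n) := by
            exact Nat.mul_le_mul_left _ (Nat.mul_le_mul_left _ ih)
        _ = (n+1)^2 * 16^(n+1) := by ring
    exact Nat.le_of_mul_le_mul_left big (by positivity)

lemma pow2n_le_fact_exp : ∀ n : ℕ, ((n:ℝ))^(2*n) ≤ ((2*n) ! : ℝ) * Real.exp n := by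
  intro n
  induction n with
  | zero => simp
  | succ n ih =>
    rcases Nat.eq_zero_or_pos n with h0 | hpos
    · subst h0
      have he1 : (1:ℝ) ≤ Real.exp 1 := by have := Real.add_one_le_exp (1:ℝ); linarith
      have : ((2*(0+1)) ! : ℝ) = 2 := by norm_num
      rw [this]
      push_cast
      norm_num
      nlinarith
    · have hn1 : (1:ℝ) ≤ (n:ℝ) := by exact_mod_cast hpos
      have hnpos : (0:ℝ) < n := by linarith
      have hstep : ((n:ℝ)+1)^(2*n) ≤ (n:ℝ)^(2*n) * Real.exp 2 := by
        have h1 : (n:ℝ)+1 ≤ (n:ℝ) * Real.exp ((n:ℝ)⁻¹) := by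
          have h2 := Real.add_one_le_exp ((n:ℝ)⁻¹)
          calc (n:ℝ)+1 = (n:ℝ)*((n:ℝ)⁻¹+1) := by field_simp; ring
            _ ≤ (n:ℝ) * Real.exp ((n:ℝ)⁻¹) := by
                apply mul_le_mul_of_nonneg_left h2 (le_of_lt hnpos)
        calc ((n:ℝ)+1)^(2*n) ≤ ((n:ℝ) * Real.exp ((n:ℝ)⁻¹))^(2*n) := by
              apply pow_le_pow_left₀ (by linarith) h1
          _ = (n:ℝ)^(2*n) * (Real.exp ((n:ℝ)⁻¹))^(2*n) := by rw [mul_pow]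
          _ = (n:ℝ)^(2*n) * Real.exp ((2*n:ℕ) * (n:ℝ)⁻¹) := by
              rw [← Real.exp_nat_mul]
          _ = (n:ℝ)^(2*n) * Real.exp 2 := by
              congr 1
              congr 1
              push_cast
              field_simp
      have hexp1 : Real.exp 1 ≤ 2.7182818286 := le_of_lt Real.exp_one_lt_d9
      have hexp2 : Real.exp 2 = Real.exp 1 * Real.exp 1 := by
        rw [← Real.exp_add]; norm_num
      have hfac : ((2*(n+1)) ! : ℝ) = (2*(n:ℝ)+2) * ((2*(n:ℝ)+1) * ((2*n) ! : ℝ)) := by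
        have h5 : 2*(n+1) = (2*n+1) + 1 := by ring
        rw [h5, Nat.factorial_succ, Nat.factorial_succ]
        push_cast
        ring
      have hexp1pos : (0:ℝ) < Real.exp 1 := Real.exp_pos _
      have hfacpos : (0:ℝ) < ((2*n) ! : ℝ) := by exact_mod_cast Nat.factorial_pos _
      have hcmp : Real.exp 2 * ((n:ℝ)+1)^2 ≤ (2*(n:ℝ)+1)*(2*(n:ℝ)+2) * Real.exp 1 := by
        have he1 : (1:ℝ) ≤ Real.exp 1 := by have := Real.add_one_le_exp (1:ℝ); linarith
        rw [hexp2]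
        have key : Real.exp 1 * ((n:ℝ)+1) ≤ (2*(2*(n:ℝ)+1)) := by nlinarith
        nlinarith [mul_le_mul_of_nonneg_left key (le_of_lt hexp1pos), sq_nonneg ((n:ℝ)+1)]
      have goal2 : ((n:ℝ)+1)^(2*(n+1)) ≤ ((2*(n+1)) ! : ℝ) * Real.exp ((n:ℝ)+1) := by
        calc ((n:ℝ)+1)^(2*(n+1)) = ((n:ℝ)+1)^(2*n) * ((n:ℝ)+1)^2 := by
              rw [← pow_add]; ring_nf
          _ ≤ (n:ℝ)^(2*n) * Real.exp 2 * ((n:ℝ)+1)^2 := by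
              apply mul_le_mul_of_nonneg_right hstep (by positivity)
          _ ≤ (((2*n) ! : ℝ) * Real.exp n) * Real.exp 2 * ((n:ℝ)+1)^2 := by
              apply mul_le_mul_of_nonneg_right (mul_le_mul_of_nonneg_right ih (by positivity)) (by positivity)
          _ = ((2*n) ! : ℝ) * Real.exp n * (Real.exp 2 * ((n:ℝ)+1)^2) := by ring
          _ ≤ ((2*n) ! : ℝ) * Real.exp n * ((2*(n:ℝ)+1)*(2*(n:ℝ)+2) * Real.exp 1) := by
              apply mul_le_mul_of_nonneg_left hcmp (by positivity)
          _ = ((2*(n:ℝ)+2) * ((2*(n:ℝ)+1) * ((2*n) ! : ℝ))) * (Real.exp n * Real.exp 1) := by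
              ring
          _ = ((2*(n+1)) ! : ℝ) * Real.exp ((n:ℝ)+1) := by
              rw [hfac, ← Real.exp_add]
      calc ((n+1:ℕ):ℝ)^(2*(n+1)) = ((n:ℝ)+1)^(2*(n+1)) := by push_cast; ring
        _ ≤ ((2*(n+1)) ! : ℝ) * Real.exp ((n:ℝ)+1) := goal2
        _ = ((2*(n+1)) ! : ℝ) * Real.exp ((n+1:ℕ):ℝ) := by push_cast; ring_nf

lemma half_pow_le_fact (n : ℕ) : ((n:ℝ)/2)^(2*n) ≤ ((2*n) ! : ℝ) := by
  have h1 := pow2n_le_fact_exp n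
  have hexpn : Real.exp n ≤ (4:ℝ)^n := by
    calc Real.exp (n:ℝ) = (Real.exp 1)^n := by
          rw [← Real.exp_nat_mul]; norm_num
      _ ≤ (4:ℝ)^n := by
          apply pow_le_pow_left₀ (le_of_lt (Real.exp_pos 1))
          have := Real.exp_one_lt_d9; linarith
  have h24 : (2:ℝ)^(2*n) = 4^n := by rw [pow_mul]; norm_num
  have h4 : ((n:ℝ)/2)^(2*n) * (4:ℝ)^n = (n:ℝ)^(2*n) := by
    rw [div_pow, h24, div_mul_cancel₀]
    positivity
  have h5 : ((n:ℝ)/2)^(2*n) * (4:ℝ)^n ≤ ((2*n) ! : ℝ) * (4:ℝ)^n := by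
    rw [h4]
    calc (n:ℝ)^(2*n) ≤ ((2*n) ! : ℝ) * Real.exp n := h1
      _ ≤ ((2*n) ! : ℝ) * (4:ℝ)^n := by
          apply mul_le_mul_of_nonneg_left hexpn (by positivity)
  exact le_of_mul_le_mul_right h5 (by positivity)

-- number of functions γ → Fin 5 with exactly k zeros
lemma level_count {γ : Type*} [Fintype γ] [DecidableEq γ] (k : ℕ) :
    (Finset.univ.filter (fun h : γ → Fin 5 =>
      (Finset.univ.filter (fun j => h j = 0)).card = k)).card
      ≤ (Fintype.card γ).choose k * 4^(Fintype.card γ - k) := by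
  classical
  set Tgt : Finset (Σ A : Finset γ, ({x // x ∉ A} → Fin 4)) :=
    (Finset.univ.powersetCard k).sigma
      (fun A => (Finset.univ : Finset ({x // x ∉ A} → Fin 4))) with hTgt
  have hcard : Tgt.card = (Fintype.card γ).choose k * 4^(Fintype.card γ - k) := by
    rw [hTgt, Finset.card_sigma]
    have hterm : ∀ A ∈ (Finset.univ : Finset γ).powersetCard k,
        (Finset.univ : Finset ({x // x ∉ A} → Fin 4)).card = 4^(Fintype.card γ - k) := by
      intro A hA
      have hAk : A.card = k := (Finset.mem_powersetCard_univ.mp hA)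
      rw [Finset.card_univ, Fintype.card_fun, Fintype.card_fin]
      congr 1
      have h1 : Fintype.card {x // x ∉ A} = Fintype.card γ - Fintype.card {x // x ∈ A} :=
        Fintype.card_subtype_compl _
      rw [h1, Fintype.card_coe, hAk]
    rw [Finset.sum_congr rfl hterm, Finset.sum_const, smul_eq_mul]
    congr 1
    rw [Finset.card_powersetCard, Finset.card_univ]
  rw [← hcard]
  -- the injection
  set ι : (γ → Fin 5) → (Σ A : Finset γ, ({x // x ∉ A} → Fin 4)) :=
    fun h => ⟨Finset.univ.filter (fun j => h j = 0),
       fun x => ⟨(h x.val).val - 1, by omega⟩⟩ with hι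
  -- reconstruction (left inverse)
  set g : (Σ A : Finset γ, ({x // x ∉ A} → Fin 4)) → (γ → Fin 5) :=
    fun p j => if hj : j ∈ p.fst then 0 else ⟨(p.snd ⟨j, hj⟩).val + 1, by omega⟩ with hg
  have hleft : ∀ h : γ → Fin 5, g (ι h) = h := by
    intro h
    funext j
    by_cases hj : h j = 0
    · have : j ∈ (ι h).fst := by simp [hι, hj]
      simp only [hg]
      rw [dif_pos this, hj]
    · have hj' : j ∉ (ι h).fst := by simp [hι, hj]
      simp only [hg]
      rw [dif_neg hj']
      have hv : (h j).val ≠ 0 := fun hc => hj (Fin.ext hc)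
      have : ((ι h).snd ⟨j, hj'⟩).val = (h j).val - 1 := rfl
      apply Fin.ext
      simp only [this]
      have := (h j).isLt
      omega
  apply Finset.card_le_card_of_injOn ι
  · intro h hh
    simp only [Finset.coe_filter, Finset.mem_coe, Set.mem_setOf_eq, Finset.mem_filter, Finset.mem_univ, true_and] at hh ⊢
    rw [hTgt, Finset.mem_sigma]
    exact ⟨Finset.mem_powersetCard_univ.mpr hh, Finset.mem_univ _⟩
  · intro h1 _ h2 _ heq
    have := congrArg g heq
    rwa [hleft, hleft] at this

lemma dset_le (n : ℕ) (hn : 1 ≤ n) {γ : Type*} [Fintype γ] [DecidableEq γ]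
    (hγ : Fintype.card γ = 2*n) :
    (Finset.univ.filter (fun h : γ → Fin 5 =>
      n ∣ (Finset.univ.filter (fun j => h j = 0)).card)).card
      ≤ 16^n + (2*n).choose n * 4^n + 1 := by
  classical
  set Z : (γ → Fin 5) → ℕ := fun h => (Finset.univ.filter (fun j => h j = 0)).card with hZ
  have hsub : (Finset.univ.filter (fun h : γ → Fin 5 => n ∣ Z h)) ⊆
      (Finset.univ.filter (fun h : γ → Fin 5 => Z h = 0)) ∪
      (Finset.univ.filter (fun h : γ → Fin 5 => Z h = n)) ∪
      (Finset.univ.filter (fun h : γ → Fin 5 => Z h = 2*n)) := by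
    intro h hh
    simp only [Finset.mem_filter, Finset.mem_univ, true_and] at hh
    have hle : Z h ≤ 2*n := by
      rw [hZ]
      calc (Finset.univ.filter (fun j => h j = 0)).card ≤ Finset.univ.card :=
            Finset.card_filter_le _ _
        _ = 2*n := by rw [Finset.card_univ, hγ]
    obtain ⟨c, hc⟩ := hh
    have hc2 : c ≤ 2 := by nlinarith
    simp only [Finset.mem_union, Finset.mem_filter, Finset.mem_univ, true_and]
    interval_cases c
    · left; left; omega
    · left; right; omega
    · right; omega
  calc (Finset.univ.filter (fun h : γ → Fin 5 => n ∣ Z h)).card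
      ≤ ((Finset.univ.filter (fun h : γ → Fin 5 => Z h = 0)) ∪
      (Finset.univ.filter (fun h : γ → Fin 5 => Z h = n)) ∪
      (Finset.univ.filter (fun h : γ → Fin 5 => Z h = 2*n))).card := Finset.card_le_card hsub
    _ ≤ ((Finset.univ.filter (fun h : γ → Fin 5 => Z h = 0)) ∪
      (Finset.univ.filter (fun h : γ → Fin 5 => Z h = n))).card +
      (Finset.univ.filter (fun h : γ → Fin 5 => Z h = 2*n)).card := Finset.card_union_le _ _
    _ ≤ (Finset.univ.filter (fun h : γ → Fin 5 => Z h = 0)).card +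
      (Finset.univ.filter (fun h : γ → Fin 5 => Z h = n)).card +
      (Finset.univ.filter (fun h : γ → Fin 5 => Z h = 2*n)).card := by
        have := Finset.card_union_le (Finset.univ.filter (fun h : γ → Fin 5 => Z h = 0))
          (Finset.univ.filter (fun h : γ → Fin 5 => Z h = n))
        exact Nat.add_le_add_right this _
    _ ≤ 16^n + (2*n).choose n * 4^n + 1 := by
        have b0 : (Finset.univ.filter (fun h : γ → Fin 5 => Z h = 0)).card ≤ 16^n := by
          have h0 := level_count (γ := γ) 0
          rw [hγ] at h0
          have e0 : (2*n).choose 0 * 4^(2*n-0) = 16^n := by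
            norm_num [pow_mul]
          rw [e0] at h0
          exact h0
        have bn : (Finset.univ.filter (fun h : γ → Fin 5 => Z h = n)).card
            ≤ (2*n).choose n * 4^n := by
          have h1 := level_count (γ := γ) n
          rw [hγ] at h1
          have e : 2*n - n = n := by rw [Nat.two_mul, Nat.add_sub_cancel]
          rw [e] at h1
          exact h1
        have b2 : (Finset.univ.filter (fun h : γ → Fin 5 => Z h = 2*n)).card ≤ 1 := by
          have h2 := level_count (γ := γ) (2*n)
          rw [hγ] at h2
          have e2 : (2*n).choose (2*n) * 4^(2*n-2*n) = 1 := by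
            simp
          rw [e2] at h2
          exact h2
        exact Nat.add_le_add (Nat.add_le_add b0 bn) b2

lemma filter_coe_card {α : Type*} [DecidableEq α] (S : Finset α) (P : α → Prop)
    [DecidablePred P] :
    (Finset.univ.filter (fun j : {x // x ∈ S} => P j.val)).card = (S.filter P).card := by
  classical
  apply Finset.card_bij (fun (j : {x // x ∈ S}) _ => j.val)
  · intro a ha
    simp only [Finset.mem_filter, Finset.mem_univ, true_and] at ha
    exact Finset.mem_filter.mpr ⟨a.prop, ha⟩
  · intro a _ b _ hab
    exact Subtype.ext hab
  · intro b hb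
    simp only [Finset.mem_filter] at hb
    exact ⟨⟨b, hb.1⟩, by simp [hb.2], rfl⟩

lemma bad_count (n r m : ℕ) (hn : 1 ≤ n) (S : Finset (Fin m)) (hS : S.card = 2*n) :
    (Finset.univ.filter (fun ω : Fin m → Fin r → Fin 5 =>
      ∑ j ∈ S, (fun i => (if ω j i = 0 then (1 : ZMod n) else 0)) = 0)).card
      ≤ (16^n + (2*n).choose n * 4^n + 1)^r * (5^r)^(m - 2*n) := by
  classical
  haveI : NeZero n := ⟨by omega⟩
  set D : Finset ({x // x ∈ S} → Fin 5) :=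
    Finset.univ.filter (fun h => n ∣ (Finset.univ.filter (fun j => h j = 0)).card) with hD
  set Tgt := (Fintype.piFinset (fun _ : Fin r => D)) ×ˢ
    (Finset.univ : Finset ({j // j ∉ S} → Fin r → Fin 5)) with hTgt
  have step1 : (Finset.univ.filter (fun ω : Fin m → Fin r → Fin 5 =>
      ∑ j ∈ S, (fun i => (if ω j i = 0 then (1 : ZMod n) else 0)) = 0)).card ≤ Tgt.card := by
    apply Finset.card_le_card_of_injOn
      (fun ω => (fun i (j : {x // x ∈ S}) => ω j.val i, fun (j : {j // j ∉ S}) i => ω j.val i))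
    · intro ω hω
      simp only [Finset.coe_filter, Finset.mem_coe, Set.mem_setOf_eq, Finset.mem_filter, Finset.mem_univ, true_and] at hω ⊢
      rw [hTgt, Finset.mem_product]
      refine ⟨Fintype.mem_piFinset.mpr fun i => ?_, Finset.mem_univ _⟩
      rw [hD, Finset.mem_filter]
      refine ⟨Finset.mem_univ _, ?_⟩
      have hsumi : (∑ j ∈ S, (if ω j i = 0 then (1 : ZMod n) else 0)) = 0 := by
        have := congrFun hω i
        rw [Finset.sum_apply] at this
        simpa using this
      rw [Finset.sum_boole] at hsumi
      have hdvd : n ∣ (S.filter (fun j => ω j i = 0)).card :=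
        (ZMod.natCast_eq_zero_iff _ _).mp hsumi
      rw [filter_coe_card S (fun j => ω j i = 0)]
      exact hdvd
    · intro ω1 _ ω2 _ heq
      simp only [Prod.mk.injEq] at heq
      obtain ⟨he1, he2⟩ := heq
      funext j i
      by_cases hj : j ∈ S
      · exact congrFun (congrFun he1 i) ⟨j, hj⟩
      · exact congrFun (congrFun he2 ⟨j, hj⟩) i
  have step2 : Tgt.card ≤ (16^n + (2*n).choose n * 4^n + 1)^r * (5^r)^(m - 2*n) := by
    rw [hTgt, Finset.card_product, Fintype.card_piFinset]
    gcongr with i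
    · calc (∏ _i : Fin r, D.card) = D.card ^ r := by
            rw [Finset.prod_const, Finset.card_univ, Fintype.card_fin]
        _ ≤ (16^n + (2*n).choose n * 4^n + 1)^r := by
            apply Nat.pow_le_pow_left
            apply dset_le n hn
            rw [Fintype.card_coe, hS]
    · rw [Finset.card_univ, Fintype.card_fun, Fintype.card_fun, Fintype.card_fin,
        Fintype.card_fin]
      have : Fintype.card {j // j ∉ S} = m - 2*n := by
        have h1 : Fintype.card {j // j ∉ S} =
            Fintype.card (Fin m) - Fintype.card {j // j ∈ S} := Fintype.card_subtype_compl _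
        rw [h1, Fintype.card_coe, hS, Fintype.card_fin]
      rw [this]
  exact le_trans step1 step2

set_option maxHeartbeats 2000000 in
lemma key_real (n r : ℕ) (hn2 : 2 ≤ n) (hr : 1 ≤ r) (m : ℕ)
    (hm : (m:ℝ) ≤ (n/2 : ℝ) * (5/4 - 5/4 * (n:ℝ) ^ (-(3:ℝ)/2))^r) :
    ((m.choose (2*n) : ℝ)) * ((16^n + (2*n).choose n * 4^n + 1 : ℕ) : ℝ)^r
      < ((5:ℝ)^r)^(2*n) := by
  have hrne : r ≠ 0 := by omega
  set t : ℝ := (n:ℝ) ^ (-(3:ℝ)/2) with ht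
  have hnR : (2:ℝ) ≤ (n:ℝ) := by exact_mod_cast hn2
  have hnpos : (0:ℝ) < n := by linarith
  have htpos : 0 < t := Real.rpow_pos_of_pos hnpos _
  have ht1 : t < 1 := Real.rpow_lt_one_of_one_lt_of_neg (by linarith) (by norm_num)
  set s := Real.sqrt n with hs
  have hspos : 0 < s := Real.sqrt_pos.mpr hnpos
  have hs2 : s^2 = (n:ℝ) := Real.sq_sqrt (le_of_lt hnpos)
  have hs1 : 1 ≤ s := Real.one_le_sqrt.mpr (by linarith)
  have hnt : (n:ℝ) * t = 1/s := by
    rw [ht, hs]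
    have e1 : (n:ℝ) * (n:ℝ)^(-(3:ℝ)/2) = (n:ℝ)^(1 + (-(3:ℝ)/2)) := by
      rw [Real.rpow_add hnpos, Real.rpow_one]
    rw [e1, show (1 + (-(3:ℝ)/2)) = -(1/2 : ℝ) by norm_num,
      Real.rpow_neg (le_of_lt hnpos), Real.sqrt_eq_rpow]
    exact (one_div _).symm
  clear_value t s
  clear ht hs
  set a := ((2*n).choose n : ℝ) with ha
  have hcen : a^2 * (3*(n:ℝ)+1) ≤ 16^n := by
    rw [ha]
    exact_mod_cast centralsq n
  have ha0 : (0:ℝ) ≤ a := Nat.cast_nonneg _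
  set P := (4:ℝ)^n with hP
  have hPpos : 0 < P := by positivity
  have hP2 : P^2 = (16:ℝ)^n := by
    rw [hP, ← pow_mul, pow_mul']; norm_num
  have hsP : s < P^2 := by
    have h1 : s ≤ (n:ℝ) := by nlinarith
    have h2 : (n:ℝ) < (16:ℝ)^n := by
      have : n < 16 ^ n := Nat.lt_pow_self (by norm_num)
      exact_mod_cast this
    rw [hP2]; linarith
  have key3 : 3*(a*s)^2 ≤ P^2 := by nlinarith [sq_nonneg a]
  have haux : a*P*s + s < 2*P^2 := by
    nlinarith [sq_nonneg (3*(a*s) - 2*P), key3, hsP, hspos, mul_nonneg ha0 (le_of_lt hspos),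
      sq_nonneg P, hPpos]
  have key2 : (16:ℝ)^n + a*4^n + 1 < 16^n * (1 + 2*((n:ℝ)*t)) := by
    rw [hnt, ← hP2, ← hP]
    have h5 : a*P + 1 < 2*P^2 * (1/s) := by
      rw [mul_one_div, lt_div_iff₀ hspos]
      nlinarith [haux]
    have expand : P^2 * (1 + 2*(1/s)) = P^2 + 2*P^2*(1/s) := by ring
    rw [expand]; linarith
  have key1 : (1-t)^(2*n) * (1 + 2*((n:ℝ)*t)) ≤ 1 := by
    have hber : 1 + ((2*n : ℕ):ℝ) * t ≤ (1+t)^(2*n) := one_add_mul_le_pow (by linarith) (2*n)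
    have hber' : 1 + 2*((n:ℝ)*t) ≤ (1+t)^(2*n) := by push_cast at hber; linarith
    calc (1-t)^(2*n) * (1 + 2*((n:ℝ)*t)) ≤ (1-t)^(2*n) * (1+t)^(2*n) := by
          apply mul_le_mul_of_nonneg_left hber' (pow_nonneg (by linarith) _)
      _ = ((1-t)*(1+t))^(2*n) := (mul_pow _ _ _).symm
      _ = (1-t^2)^(2*n) := by rw [show (1-t)*(1+t) = 1 - t^2 by ring]
      _ ≤ 1 := by
          have e1 : (0:ℝ) ≤ 1 - t^2 := by nlinarith
          have e2 : (1:ℝ) - t^2 ≤ 1 := by nlinarith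
          exact pow_le_one₀ e1 e2
  have core : ((5/4)*(1-t))^(2*n) * ((16:ℝ)^n + a*4^n + 1) < (25:ℝ)^n := by
    have hT16 : (1-t)^(2*n) * ((16:ℝ)^n + a*4^n + 1) < 16^n := by
      have h1 : (0:ℝ) < (1-t)^(2*n) := pow_pos (by linarith) _
      calc (1-t)^(2*n) * ((16:ℝ)^n + a*4^n + 1)
          < (1-t)^(2*n) * (16^n * (1 + 2*((n:ℝ)*t))) := by
            apply mul_lt_mul_of_pos_left key2 h1
        _ = (16:ℝ)^n * ((1-t)^(2*n) * (1 + 2*((n:ℝ)*t))) := by ring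
        _ ≤ (16:ℝ)^n * 1 := by apply mul_le_mul_of_nonneg_left key1 (by positivity)
        _ = (16:ℝ)^n := mul_one _
    have e : ((5:ℝ)/4)^(2*n) = (25/16)^n := by rw [pow_mul]; norm_num
    calc ((5/4)*(1-t))^(2*n) * ((16:ℝ)^n + a*4^n + 1)
        = (25/16 : ℝ)^n * ((1-t)^(2*n) * ((16:ℝ)^n + a*4^n + 1)) := by
          rw [mul_pow, e, mul_assoc]
      _ < (25/16 : ℝ)^n * (16:ℝ)^n := by
          apply mul_lt_mul_of_pos_left hT16 (by positivity)
      _ = (25:ℝ)^n := by rw [← mul_pow]; norm_num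
  -- assemble
  set β : ℝ := (5/4)*(1-t) with hβ
  have hβ0 : 0 ≤ β := by rw [hβ]; nlinarith
  have hmle : (m:ℝ) ≤ (n/2 : ℝ) * β^r := by
    rw [hβ, show (5/4 : ℝ)*(1-t) = 5/4 - 5/4*t by ring]
    exact hm
  have hT : ((16^n + (2*n).choose n * 4^n + 1 : ℕ) : ℝ) = (16:ℝ)^n + a*4^n + 1 := by
    push_cast; ring
  have hT0 : (0:ℝ) ≤ (16:ℝ)^n + a*4^n + 1 := by positivity
  have hchoose : (m.choose (2*n) : ℝ) ≤ (m:ℝ)^(2*n)/((2*n) ! : ℝ) := by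
    have := Nat.choose_le_pow_div (α := ℝ) (2*n) m
    simpa using this
  have hfacpos : (0:ℝ) < ((2*n) ! : ℝ) := by exact_mod_cast Nat.factorial_pos _
  have hpowm : (m:ℝ)^(2*n) ≤ ((n/2 : ℝ))^(2*n) * (β^(2*n))^r := by
    calc (m:ℝ)^(2*n) ≤ ((n/2 : ℝ) * β^r)^(2*n) := by
          apply pow_le_pow_left₀ (Nat.cast_nonneg m) hmle
      _ = ((n/2 : ℝ))^(2*n) * (β^(2*n))^r := by
          rw [mul_pow, ← pow_mul, ← pow_mul, mul_comm r (2*n)]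
  have hch2 : (m.choose (2*n) : ℝ) ≤ (β^(2*n))^r := by
    have h1 : (m:ℝ)^(2*n)/((2*n) ! : ℝ) ≤ (β^(2*n))^r := by
      rw [div_le_iff₀ hfacpos]
      calc (m:ℝ)^(2*n) ≤ ((n/2 : ℝ))^(2*n) * (β^(2*n))^r := hpowm
        _ ≤ ((2*n) ! : ℝ) * (β^(2*n))^r := by
            apply mul_le_mul_of_nonneg_right (half_pow_le_fact n) (by positivity)
        _ = (β^(2*n))^r * ((2*n) ! : ℝ) := by ring
    exact le_trans hchoose h1
  calc ((m.choose (2*n) : ℝ)) * ((16^n + (2*n).choose n * 4^n + 1 : ℕ) : ℝ)^r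
      ≤ (β^(2*n))^r * ((16:ℝ)^n + a*4^n + 1)^r := by
        rw [hT]
        apply mul_le_mul_of_nonneg_right hch2 (by positivity)
    _ = (β^(2*n) * ((16:ℝ)^n + a*4^n + 1))^r := (mul_pow _ _ _).symm
    _ < ((25:ℝ)^n)^r := by
        apply pow_lt_pow_left₀ core (by positivity) hrne
    _ = ((5:ℝ)^r)^(2*n) := by
        rw [← pow_mul, ← pow_mul, show (25:ℝ) = 5^2 by norm_num, ← pow_mul]
        congr 1
        ring

lemma exists_seq (n r m : ℕ) (hn : 1 ≤ n) (hr : 1 ≤ r)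
    (hm : (m:ℝ) ≤ (n/2 : ℝ) * (max (5/4 - 5/4 * (n:ℝ) ^ (-(3:ℝ)/2)) 0)^r) :
    ∃ X : Fin m → (Fin r → ZMod n), ∀ S : Finset (Fin m),
      S.card = 2*n → ∑ j ∈ S, X j ≠ 0 := by
  classical
  have hrne : r ≠ 0 := by omega
  by_cases hsmall : m < 2*n
  · refine ⟨fun _ _ => 0, fun S hS => ?_⟩
    exfalso
    have hle := Finset.card_le_univ S
    rw [Fintype.card_fin] at hle
    omega
  · have hm2n : 2*n ≤ m := by omega
    have hn2 : 2 ≤ n := by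
      by_contra hcon2
      have hn1 : n = 1 := by omega
      subst hn1
      rw [Nat.cast_one, Real.one_rpow] at hm
      norm_num [zero_pow hrne] at hm
      omega
    have htle : (n:ℝ) ^ (-(3:ℝ)/2) ≤ 1 := by
      apply Real.rpow_le_one_of_one_le_of_nonpos
      · exact_mod_cast hn
      · norm_num
    have hbase0 : (0:ℝ) ≤ 5/4 - 5/4 * (n:ℝ) ^ (-(3:ℝ)/2) := by
      have h0 : (0:ℝ) < (n:ℝ) ^ (-(3:ℝ)/2) := Real.rpow_pos_of_pos (by positivity) _
      linarith
    rw [max_eq_left hbase0] at hm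
    by_contra hcon
    push_neg at hcon
    haveI : NeZero n := ⟨by omega⟩
    set Bad : Finset (Fin m) → Finset (Fin m → Fin r → Fin 5) := fun S =>
      Finset.univ.filter (fun ω =>
        ∑ j ∈ S, (fun i => (if ω j i = 0 then (1 : ZMod n) else 0)) = 0) with hBad
    have hcover : (Finset.univ : Finset (Fin m → Fin r → Fin 5)) ⊆
        (Finset.powersetCard (2*n) Finset.univ).biUnion Bad := by
      intro ω _
      obtain ⟨S, hS1, hS2⟩ := hcon (fun j i => if ω j i = 0 then (1:ZMod n) else 0)
      apply Finset.mem_biUnion.mpr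
      refine ⟨S, Finset.mem_powersetCard_univ.mpr hS1, ?_⟩
      rw [hBad]
      exact Finset.mem_filter.mpr ⟨Finset.mem_univ _, hS2⟩
    have hcardU : (Finset.univ : Finset (Fin m → Fin r → Fin 5)).card = (5^r)^m := by
      rw [Finset.card_univ, Fintype.card_fun, Fintype.card_fun, Fintype.card_fin,
        Fintype.card_fin, Fintype.card_fin]
    have hcount : (5^r)^m ≤ m.choose (2*n) *
        ((16^n + (2*n).choose n * 4^n + 1)^r * (5^r)^(m - 2*n)) := by
      have h1 : (Finset.univ : Finset (Fin m → Fin r → Fin 5)).card ≤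
          ∑ S ∈ Finset.powersetCard (2*n) (Finset.univ : Finset (Fin m)), (Bad S).card :=
        le_trans (Finset.card_le_card hcover) (Finset.card_biUnion_le)
      have h3 : ∑ S ∈ Finset.powersetCard (2*n) (Finset.univ : Finset (Fin m)), (Bad S).card ≤
          m.choose (2*n) * ((16^n + (2*n).choose n * 4^n + 1)^r * (5^r)^(m - 2*n)) := by
        have h2 : ∀ S ∈ Finset.powersetCard (2*n) (Finset.univ : Finset (Fin m)),
            (Bad S).card ≤ (16^n + (2*n).choose n * 4^n + 1)^r * (5^r)^(m - 2*n) := by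
          intro S hS
          rw [hBad]
          exact bad_count n r m hn S (Finset.mem_powersetCard_univ.mp hS)
        calc ∑ S ∈ Finset.powersetCard (2*n) (Finset.univ : Finset (Fin m)), (Bad S).card
            ≤ (Finset.powersetCard (2*n) (Finset.univ : Finset (Fin m))).card •
              ((16^n + (2*n).choose n * 4^n + 1)^r * (5^r)^(m - 2*n)) :=
              Finset.sum_le_card_nsmul _ _ _ h2
          _ = m.choose (2*n) * ((16^n + (2*n).choose n * 4^n + 1)^r * (5^r)^(m - 2*n)) := by
              rw [smul_eq_mul, Finset.card_powersetCard, Finset.card_univ, Fintype.card_fin]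
      calc (5^r)^m = (Finset.univ : Finset (Fin m → Fin r → Fin 5)).card := hcardU.symm
        _ ≤ _ := le_trans h1 h3
    have hkey : (5^r)^(2*n) ≤ m.choose (2*n) * (16^n + (2*n).choose n * 4^n + 1)^r := by
      have hsplit : (5^r)^m = (5^r)^(2*n) * (5^r)^(m-2*n) := by
        rw [← pow_add]
        congr 1
        omega
      have h4 : (5^r)^(2*n) * (5^r)^(m-2*n) ≤
          (m.choose (2*n) * (16^n + (2*n).choose n * 4^n + 1)^r) * (5^r)^(m-2*n) := by
        rw [← hsplit, mul_assoc]
        exact hcount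
      exact Nat.le_of_mul_le_mul_right h4 (by positivity)
    have hreal := key_real n r hn2 hr m hm
    have hcast : (((5^r)^(2*n) : ℕ) : ℝ) ≤
        (m.choose (2*n) : ℝ) * ((16^n + (2*n).choose n * 4^n + 1 : ℕ):ℝ)^r := by
      exact_mod_cast hkey
    have hcast2 : ((5:ℝ)^r)^(2*n) ≤
        (m.choose (2*n) : ℝ) * ((16^n + (2*n).choose n * 4^n + 1 : ℕ):ℝ)^r := by
      push_cast at hcast ⊢
      exact hcast
    linarith

theorem egz_lower_bound_k2 :
    ∃ C : ℝ, C > 0 ∧ ∀ n r : ℕ, 1 ≤ n → 1 ≤ r →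
      ∃ X : Fin (⌊(n / 2 : ℝ) * (max (5 / 4 - C * (n : ℝ) ^ (-(3 : ℝ) / 2)) 0) ^ r⌋₊) →
          (Fin r → ZMod n),
        ∀ S : Finset (Fin (⌊(n / 2 : ℝ) * (max (5 / 4 - C * (n : ℝ) ^ (-(3 : ℝ) / 2)) 0) ^ r⌋₊)),
          S.card = 2 * n → ∑ j ∈ S, X j ≠ 0 := by
  refine ⟨5/4, by norm_num, fun n r hn hr => ?_⟩
  apply exists_seq n r _ hn hr
  apply Nat.floor_le
  positivity
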